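/- Let (A,·) and (A*,∘) be finite-dimensional (nonunital) associative algebras on dual spaces such that (A, A*, R·*, L·*, R∘*, L∘*) is a matched pair of associative algebras, and let AD(A) = A ⊕ A* be the resulting associative algebra with product (x+a*)*(y+b*) = (x·y + R∘*(a*)y + L∘*(b*)x) + (a*∘b* + R·*(x)b* + L·*(y)a*). Let {e_1,…,e_n} be a basis of A, {e_1*,…,e_n*} its dual basis, and r = Σ_i e_i ⊗ e_i* ∈ AD(A) ⊗ AD(A). Then: (i) (id ⊗ L(μ) − R(μ) ⊗ id)(r + σ(r)) = 0 for every μ ∈ AD(A), and (ii) r satisfies the associative Yang–Baxter equation r₁₂r₁₃ + r₁₃r₂₃ − r₂₃r₁₂ = 0 in AD(A). -/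

import Mathlib

open TensorProduct LinearMap

section Prelude
variable {F : Type*} [Field F]

/-- Associativity of a (nonunital) bilinear product. -/
def IsAssocMul {A : Type*} [AddCommGroup A] [Module F A]
    (m : A →ₗ[F] A →ₗ[F] A) : Prop :=
  ∀ x y z, m (m x y) z = m x (m y z)

/-- `(l, r, V)` is a bimodule of the associative algebra `(A, m)`. -/
def IsBimodule {A V : Type*} [AddCommGroup A] [Module F A]
    [AddCommGroup V] [Module F V]
    (m : A →ₗ[F] A →ₗ[F] A) (l r : A →ₗ[F] V →ₗ[F] V) : Prop :=
  (∀ x y v, l (m x y) v = l x (l y v)) ∧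
  (∀ x y v, r (m x y) v = r y (r x v)) ∧
  (∀ x y v, l x (r y v) = r y (l x v))

/-- `(A, B, lA, rA, lB, rB)` is a matched pair of associative algebras. -/
def IsMatchedPair {A B : Type*} [AddCommGroup A] [Module F A]
    [AddCommGroup B] [Module F B]
    (mA : A →ₗ[F] A →ₗ[F] A) (mB : B →ₗ[F] B →ₗ[F] B)
    (lA rA : A →ₗ[F] B →ₗ[F] B) (lB rB : B →ₗ[F] A →ₗ[F] A) : Prop :=
  IsAssocMul mA ∧ IsAssocMul mB ∧ IsBimodule mA lA rA ∧ IsBimodule mB lB rB ∧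
  (∀ x a b, lA x (mB a b) = lA (rB a x) b + mB (lA x a) b) ∧
  (∀ x a b, rA x (mB a b) = rA (lB b x) a + mB a (rA x b)) ∧
  (∀ a x y, lB a (mA x y) = lB (rA x a) y + mA (lB a x) y) ∧
  (∀ a x y, rB a (mA x y) = rB (lA y a) x + mA x (rB a y)) ∧
  (∀ x a b, lA (lB a x) b + mB (rA x a) b - rA (rB b x) a - mB a (lA x b) = 0) ∧
  (∀ a x y, lB (lA x a) y + mA (rB a x) y - rB (rA y a) x - mA x (lB a y) = 0)

/-- Dendriform algebra axioms for a pair of bilinear products `≻ = s`, `≺ = p`. -/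
def IsDendriform {A : Type*} [AddCommGroup A] [Module F A]
    (s p : A →ₗ[F] A →ₗ[F] A) : Prop :=
  (∀ x y z, p (p x y) z = p x (s y z + p y z)) ∧
  (∀ x y z, p (s x y) z = s x (p y z)) ∧
  (∀ x y z, s x (s y z) = s (s x y + p x y) z)

/-- The pairing of `f ⊗ g ∈ A* ⊗ A*` with elements of `A ⊗ A`. -/
noncomputable def pair2 {A : Type*} [AddCommGroup A] [Module F A]
    (f g : Module.Dual F A) : (A ⊗[F] A) →ₗ[F] F :=
  (TensorProduct.lid F F).toLinearMap ∘ₗ TensorProduct.map f g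

/-- `t12 m (r ⊗ s)` is `r₁₂ ∙ s₁₃`: on `(x ⊗ y) ⊗ (x' ⊗ y')` it gives `m x x' ⊗ y ⊗ y'`. -/
noncomputable def t12 {A : Type*} [AddCommGroup A] [Module F A]
    (m : A →ₗ[F] A →ₗ[F] A) :
    ((A ⊗[F] A) ⊗[F] (A ⊗[F] A)) →ₗ[F] A ⊗[F] (A ⊗[F] A) :=
  TensorProduct.map (TensorProduct.lift m) LinearMap.id ∘ₗ
    (TensorProduct.tensorTensorTensorComm F A A A A).toLinearMap

/-- `t13 m (r ⊗ s)` is `r₁₃ ∙ s₂₃`: on `(x ⊗ y) ⊗ (x' ⊗ y')` it gives `x ⊗ x' ⊗ m y y'`. -/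
noncomputable def t13 {A : Type*} [AddCommGroup A] [Module F A]
    (m : A →ₗ[F] A →ₗ[F] A) :
    ((A ⊗[F] A) ⊗[F] (A ⊗[F] A)) →ₗ[F] A ⊗[F] (A ⊗[F] A) :=
  (TensorProduct.assoc F A A A).toLinearMap ∘ₗ
    TensorProduct.map LinearMap.id (TensorProduct.lift m) ∘ₗ
    (TensorProduct.tensorTensorTensorComm F A A A A).toLinearMap

/-- `t23 m (r ⊗ s)` is `r₂₃ ∙ s₁₂`: on `(x ⊗ y) ⊗ (x' ⊗ y')` it gives `x' ⊗ m x y' ⊗ y`. -/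
noncomputable def t23 {A : Type*} [AddCommGroup A] [Module F A]
    (m : A →ₗ[F] A →ₗ[F] A) :
    ((A ⊗[F] A) ⊗[F] (A ⊗[F] A)) →ₗ[F] A ⊗[F] (A ⊗[F] A) :=
  (TensorProduct.leftComm F A A A).toLinearMap ∘ₗ
    TensorProduct.map LinearMap.id (TensorProduct.comm F A A).toLinearMap ∘ₗ
    TensorProduct.map (TensorProduct.lift m) LinearMap.id ∘ₗ
    (TensorProduct.tensorTensorTensorComm F A A A A).toLinearMap ∘ₗ
    TensorProduct.map LinearMap.id (TensorProduct.comm F A A).toLinearMap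

/-- `aybE m r = r₁₂r₁₃ + r₁₃r₂₃ − r₂₃r₁₂`, the associative Yang–Baxter expression. -/
noncomputable def aybE {A : Type*} [AddCommGroup A] [Module F A]
    (m : A →ₗ[F] A →ₗ[F] A) (r : A ⊗[F] A) : A ⊗[F] (A ⊗[F] A) :=
  t12 m (r ⊗ₜ r) + t13 m (r ⊗ₜ r) - t23 m (r ⊗ₜ r)

end Prelude


private lemma sum_ite_irrel' {α M : Type*} [Fintype α] [AddCommMonoid M]
    (P : Prop) [Decidable P] (f : α → M) :
    (∑ x : α, if P then f x else 0) = if P then ∑ x : α, f x else 0 := by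
  split <;> simp

set_option maxHeartbeats 1600000 in
/-- in the associative double `AD(A) = A ⋈ A*` coming from a matched
pair `(A, A*, R·*, L·*, R∘*, L∘*)`, the canonical element `r = Σᵢ eᵢ ⊗ eᵢ*`
satisfies `(id ⊗ L(μ) − R(μ) ⊗ id)(r + σ(r)) = 0` for all `μ`, and the
associative Yang–Baxter equation `r₁₂r₁₃ + r₁₃r₂₃ − r₂₃r₁₂ = 0`. -/
theorem associative_double_canonical_r
    {F A : Type*} [Field F] [AddCommGroup A] [Module F A]
    {ι : Type*} [Fintype ι] (bA : Module.Basis ι F A)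
    (mA : A →ₗ[F] A →ₗ[F] A) (hA : IsAssocMul mA)
    (circ : Module.Dual F A →ₗ[F] Module.Dual F A →ₗ[F] Module.Dual F A)
    (hC : IsAssocMul circ)
    (Rd Ld : A →ₗ[F] Module.Dual F A →ₗ[F] Module.Dual F A)
    (hRd : ∀ (x y : A) (a : Module.Dual F A), Rd x a y = a (mA y x))
    (hLd : ∀ (x y : A) (a : Module.Dual F A), Ld x a y = a (mA x y))
    (Ro Lo : Module.Dual F A →ₗ[F] A →ₗ[F] A)
    (hRo : ∀ (a b : Module.Dual F A) (x : A), b (Ro a x) = circ b a x)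
    (hLo : ∀ (a b : Module.Dual F A) (x : A), b (Lo a x) = circ a b x)
    (hmp : IsMatchedPair mA circ Rd Ld Ro Lo)
    -- the associative double product on `AD(A) = A ⊕ A*`
    (M : (A × Module.Dual F A) →ₗ[F] (A × Module.Dual F A) →ₗ[F]
      (A × Module.Dual F A))
    (hM : ∀ u v : A × Module.Dual F A, M u v =
      (mA u.1 v.1 + Ro u.2 v.1 + Lo v.2 u.1,
       circ u.2 v.2 + Rd u.1 v.2 + Ld v.1 u.2))
    -- the canonical element `r = Σᵢ eᵢ ⊗ eᵢ*`
    (r : (A × Module.Dual F A) ⊗[F] (A × Module.Dual F A))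
    (hr : r = ∑ i : ι, ((bA i, 0) : A × Module.Dual F A) ⊗ₜ[F]
      (((0 : A), bA.coord i) : A × Module.Dual F A)) :
    (∀ μ : A × Module.Dual F A,
      TensorProduct.map
          (LinearMap.id : (A × Module.Dual F A) →ₗ[F] (A × Module.Dual F A)) (M μ)
        (r + (TensorProduct.comm F (A × Module.Dual F A) (A × Module.Dual F A)) r) -
      TensorProduct.map (M.flip μ)
          (LinearMap.id : (A × Module.Dual F A) →ₗ[F] (A × Module.Dual F A))
        (r + (TensorProduct.comm F (A × Module.Dual F A) (A × Module.Dual F A)) r) = 0) ∧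
    aybE M r = 0 := by
    classical
  let bD : Module.Basis (ι ⊕ ι) F (A × Module.Dual F A) := bA.prod bA.dualBasis
  constructor
  · rintro ⟨x, a⟩
    refine Module.Basis.ext_elem (bD.tensorProduct bD) fun pq => ?_
    obtain ⟨p, q⟩ := pq
    rw [hr]
    simp only [map_add, map_sub, map_sum, TensorProduct.comm_tmul,
      TensorProduct.map_tmul, LinearMap.id_coe, id_eq, LinearMap.flip_apply, hM,
      map_zero, LinearMap.zero_apply, zero_add, add_zero,
      Finsupp.coe_sub, Finsupp.coe_add, Pi.sub_apply, Pi.add_apply,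
      Finsupp.finset_sum_apply,
      Module.Basis.tensorProduct_repr_tmul_apply, Finsupp.coe_zero, Pi.zero_apply]
    rcases p with j | j <;> rcases q with k | k <;>
    · simp only [bD, Module.Basis.prod_repr_inl, Module.Basis.prod_repr_inr, Module.Basis.dualBasis_repr,
        Module.Basis.repr_self, map_zero, Finsupp.coe_zero, Pi.zero_apply,
        Finsupp.single_apply, smul_eq_mul, Module.Basis.coord_apply, Module.Basis.repr_self_apply, sum_ite_irrel',
        mul_ite, ite_mul, mul_one, one_mul, mul_zero, zero_mul,
        Finset.sum_ite_eq, Finset.sum_ite_eq', Finset.mem_univ, if_true,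
        Finset.sum_const_zero, zero_add, add_zero, zero_sub, sub_zero, sub_self]
      simp only [LinearMap.add_apply, Finsupp.add_apply, map_add, ← Module.Basis.coord_apply,
        hRo, hLo, hRd, hLd]
      ring
  · refine Module.Basis.ext_elem (bD.tensorProduct (bD.tensorProduct bD)) fun pqs => ?_
    obtain ⟨p, q, s⟩ := pqs
    rw [aybE, hr]
    simp only [t12, t13, t23, TensorProduct.sum_tmul, TensorProduct.tmul_sum,
      map_add, map_sub, map_sum, LinearMap.coe_comp, Function.comp_apply,
      LinearEquiv.coe_coe, TensorProduct.tensorTensorTensorComm_tmul,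
      TensorProduct.map_tmul, TensorProduct.lift.tmul, TensorProduct.assoc_tmul,
      TensorProduct.leftComm_tmul, TensorProduct.comm_tmul,
      LinearMap.id_coe, id_eq, hM,
      map_zero, LinearMap.zero_apply, zero_add, add_zero,
      Finsupp.coe_sub, Finsupp.coe_add, Pi.sub_apply, Pi.add_apply,
      Finsupp.finset_sum_apply,
      Module.Basis.tensorProduct_repr_tmul_apply, Finsupp.coe_zero, Pi.zero_apply]
    rcases p with j | j <;> rcases q with k | k <;> rcases s with l | l <;>
    · simp only [bD, Module.Basis.prod_repr_inl, Module.Basis.prod_repr_inr, Module.Basis.dualBasis_repr,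
        Module.Basis.repr_self, map_zero, Finsupp.coe_zero, Pi.zero_apply,
        Finsupp.single_apply, smul_eq_mul, Module.Basis.coord_apply, Module.Basis.repr_self_apply, sum_ite_irrel',
        mul_ite, ite_mul, mul_one, one_mul, mul_zero, zero_mul,
        Finset.sum_ite_eq, Finset.sum_ite_eq', Finset.mem_univ, if_true,
        Finset.sum_const_zero, zero_add, add_zero, zero_sub, sub_zero, sub_self,
        neg_eq_zero]
      try
        simp only [LinearMap.add_apply, Finsupp.add_apply, map_add, ← Module.Basis.coord_apply,
          hRo, hLo, hRd, hLd]
        ring
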